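/- For real r, let D₄(r) be the 4×4 matrix [[r, e^{−iπ/3}, 2e^{−2iπ/3}, −1], [e^{iπ/3}, r, e^{−iπ/3}, 2], [2e^{2iπ/3}, e^{iπ/3}, r, 1], [−1, 2, 1, r]]. Then: (1) det D₄(r) = r⁴ − 12r² + 6r + 17 for every real r; (2) the polynomial r⁴ − 12r² + 6r + 17 has a real root, and its largest real root r̂ is a simple root; (3) D₄(r̂) is Hermitian positive semidefinite of rank 3 (corank one); (4) the kernel of D₄(r̂) is spanned by the vector (2r̂² − 4i√3·r̂ − 5 + 5i√3, −4r̂² − 2i√3·r̂ + 16 + 4i√3, −2r̂² + 4r̂ − 3 − 3i√3, 2r̂³ − 12r̂ + 8)ᵀ ∈ ℂ⁴. -/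

import Mathlib

open scoped ComplexOrder

/-- The matrix `D₄(r)` of the 4⊗4 construction. -/
noncomputable def D4 (r : ℝ) : Matrix (Fin 4) (Fin 4) ℂ :=
  !![(r : ℂ), Complex.exp (-(Real.pi : ℂ) * Complex.I / 3),
       2 * Complex.exp (-(2 * (Real.pi : ℂ)) * Complex.I / 3), -1;
     Complex.exp ((Real.pi : ℂ) * Complex.I / 3), (r : ℂ),
       Complex.exp (-(Real.pi : ℂ) * Complex.I / 3), 2;
     2 * Complex.exp (2 * (Real.pi : ℂ) * Complex.I / 3),
       Complex.exp ((Real.pi : ℂ) * Complex.I / 3), (r : ℂ), 1;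
     -1, 2, 1, (r : ℂ)]

namespace Stmt13Aux

lemma s3_sq : (Complex.I * (Real.sqrt 3 : ℂ)) ^ 2 = -3 := by
  have h3 : ((Real.sqrt 3 : ℝ) : ℂ) ^ 2 = 3 := by
    norm_cast
    rw [Real.sq_sqrt] <;> norm_num
  rw [mul_pow, Complex.I_sq, h3]
  ring

lemma exp_p1 : Complex.exp ((Real.pi : ℂ) * Complex.I / 3) = (1 + (Complex.I * (Real.sqrt 3 : ℂ))) / 2 := by
  have h : (Real.pi : ℂ) * Complex.I / 3 = ((Real.pi / 3 : ℝ) : ℂ) * Complex.I := by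
    push_cast; ring
  rw [h, Complex.exp_mul_I, ← Complex.ofReal_cos, ← Complex.ofReal_sin,
    Real.cos_pi_div_three, Real.sin_pi_div_three]
  push_cast; ring

lemma exp_m1 : Complex.exp (-(Real.pi : ℂ) * Complex.I / 3) = (1 - (Complex.I * (Real.sqrt 3 : ℂ))) / 2 := by
  have h : -(Real.pi : ℂ) * Complex.I / 3 = ((-(Real.pi / 3) : ℝ) : ℂ) * Complex.I := by
    push_cast; ring
  rw [h, Complex.exp_mul_I, ← Complex.ofReal_cos, ← Complex.ofReal_sin,
    Real.cos_neg, Real.sin_neg, Real.cos_pi_div_three, Real.sin_pi_div_three]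
  push_cast; ring

lemma exp_p2 : Complex.exp (2 * (Real.pi : ℂ) * Complex.I / 3) = (-1 + (Complex.I * (Real.sqrt 3 : ℂ))) / 2 := by
  have h : 2 * (Real.pi : ℂ) * Complex.I / 3 = ((Real.pi - Real.pi / 3 : ℝ) : ℂ) * Complex.I := by
    push_cast; ring
  rw [h, Complex.exp_mul_I, ← Complex.ofReal_cos, ← Complex.ofReal_sin,
    Real.cos_pi_sub, Real.sin_pi_sub, Real.cos_pi_div_three, Real.sin_pi_div_three]
  push_cast; ring

lemma exp_m2 : Complex.exp (-(2 * (Real.pi : ℂ)) * Complex.I / 3) = (-1 - (Complex.I * (Real.sqrt 3 : ℂ))) / 2 := by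
  have h : -(2 * (Real.pi : ℂ)) * Complex.I / 3
      = ((-(Real.pi - Real.pi / 3) : ℝ) : ℂ) * Complex.I := by
    push_cast; ring
  rw [h, Complex.exp_mul_I, ← Complex.ofReal_cos, ← Complex.ofReal_sin,
    Real.cos_neg, Real.sin_neg, Real.cos_pi_sub, Real.sin_pi_sub,
    Real.cos_pi_div_three, Real.sin_pi_div_three]
  push_cast; ring

lemma D4_eq (r : ℝ) : D4 r =
    !![(r : ℂ), (1 - (Complex.I * (Real.sqrt 3 : ℂ))) / 2, -1 - (Complex.I * (Real.sqrt 3 : ℂ)), -1;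
       (1 + (Complex.I * (Real.sqrt 3 : ℂ))) / 2, (r : ℂ), (1 - (Complex.I * (Real.sqrt 3 : ℂ))) / 2, 2;
       -1 + (Complex.I * (Real.sqrt 3 : ℂ)), (1 + (Complex.I * (Real.sqrt 3 : ℂ))) / 2, (r : ℂ), 1;
       -1, 2, 1, (r : ℂ)] := by
  unfold D4
  rw [exp_p1, exp_m1, exp_p2, exp_m2]
  ext i j
  fin_cases i <;> fin_cases j <;> simp <;> ring

lemma det_D4 (r : ℝ) :
    (D4 r).det = (r : ℂ) ^ 4 - 12 * (r : ℂ) ^ 2 + 6 * (r : ℂ) + 17 := by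
  rw [D4_eq]
  simp [Matrix.det_succ_row_zero, Fin.sum_univ_succ, Fin.succAbove, Fin.castSucc, Fin.castAdd, Fin.castLE]
  linear_combination ((3 / 2 : ℂ) * (r : ℂ) ^ 2 - (3 / 2 : ℂ) * (r : ℂ) - 4) * s3_sq

lemma D4_sub_smul (a b : ℝ) : D4 (a - b) = D4 a - (b : ℂ) • (1 : Matrix (Fin 4) (Fin 4) ℂ) := by
  rw [D4_eq, D4_eq]
  ext i j
  fin_cases i <;> fin_cases j <;>
    simp [Matrix.one_apply] <;> push_cast <;> ring

end Stmt13Aux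

theorem stmt13 :
    (∀ r : ℝ, (D4 r).det = (r : ℂ) ^ 4 - 12 * (r : ℂ) ^ 2 + 6 * (r : ℂ) + 17) ∧
    ∃ rh : ℝ,
      (rh ^ 4 - 12 * rh ^ 2 + 6 * rh + 17 = 0) ∧
      (∀ s : ℝ, s ^ 4 - 12 * s ^ 2 + 6 * s + 17 = 0 → s ≤ rh) ∧
      (4 * rh ^ 3 - 24 * rh + 6 ≠ 0) ∧
      (D4 rh).PosSemidef ∧ (D4 rh).rank = 3 ∧
      (∀ x : Fin 4 → ℂ, (D4 rh).mulVec x = 0 ↔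
        ∃ c : ℂ, x = c •
          ![2 * (rh : ℂ) ^ 2 - 4 * Complex.I * (Real.sqrt 3 : ℂ) * (rh : ℂ) - 5
              + 5 * Complex.I * (Real.sqrt 3 : ℂ),
            -4 * (rh : ℂ) ^ 2 - 2 * Complex.I * (Real.sqrt 3 : ℂ) * (rh : ℂ) + 16
              + 4 * Complex.I * (Real.sqrt 3 : ℂ),
            -2 * (rh : ℂ) ^ 2 + 4 * (rh : ℂ) - 3 - 3 * Complex.I * (Real.sqrt 3 : ℂ),
            2 * (rh : ℂ) ^ 3 - 12 * (rh : ℂ) + 8]) := by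
  -- find the root of the cubic factor in [2.7, 2.8]
  have hcont : ContinuousOn (fun x : ℝ => x ^ 3 - x ^ 2 - 11 * x + 17) (Set.Icc 2.7 2.8) := by
    fun_prop
  have hiv := intermediate_value_Icc (by norm_num : (2.7 : ℝ) ≤ 2.8) hcont
  have h0mem : (0 : ℝ) ∈ Set.Icc ((fun x : ℝ => x ^ 3 - x ^ 2 - 11 * x + 17) 2.7)
      ((fun x : ℝ => x ^ 3 - x ^ 2 - 11 * x + 17) 2.8) := by
    constructor <;> norm_num
  obtain ⟨rh, hrmem, hq⟩ := hiv h0mem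
  obtain ⟨hrl, hru⟩ := hrmem
  simp only at hq
  have hq' : rh ^ 3 - rh ^ 2 - 11 * rh + 17 = 0 := hq
  -- maximality
  have hmax : ∀ s : ℝ, s ^ 4 - 12 * s ^ 2 + 6 * s + 17 = 0 → s ≤ rh := by
    intro t ht
    by_contra hgt
    push_neg at hgt
    have hw : t ^ 2 + t * rh + rh ^ 2 - t - rh - 11 > 0 := by nlinarith
    have h2 : t ^ 3 - t ^ 2 - 11 * t + 17 > 0 := by
      nlinarith [mul_pos (sub_pos.2 hgt) hw]
    have h3 : (t + 1) * (t ^ 3 - t ^ 2 - 11 * t + 17) > 0 :=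
      mul_pos (by linarith) h2
    nlinarith [h3]
  -- complex versions
  have hqC : (rh : ℂ) ^ 3 - (rh : ℂ) ^ 2 - 11 * (rh : ℂ) + 17 = 0 := by
    exact_mod_cast congrArg (fun x : ℝ => (x : ℂ)) hq'
  have hv3R : (0 : ℝ) < 2 * rh ^ 3 - 12 * rh + 8 := by nlinarith
  have hv3 : (2 * (rh : ℂ) ^ 3 - 12 * (rh : ℂ) + 8) ≠ 0 := by
    intro hc
    rw [show (2 * (rh : ℂ) ^ 3 - 12 * (rh : ℂ) + 8) = ((2 * rh ^ 3 - 12 * rh + 8 : ℝ) : ℂ) by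
      push_cast; ring] at hc
    exact hv3R.ne' (by exact_mod_cast hc)
  -- Hermitian
  have hH : (D4 rh).IsHermitian := by
    rw [Matrix.IsHermitian, Stmt13Aux.D4_eq]
    ext i j
    fin_cases i <;> fin_cases j <;>
      simp [Matrix.conjTranspose_apply, Complex.conj_ofReal, map_ofNat] <;> ring
  -- kernel characterization
  have hker : ∀ x : Fin 4 → ℂ, (D4 rh).mulVec x = 0 ↔
      ∃ c : ℂ, x = c •
        ![2 * (rh : ℂ) ^ 2 - 4 * Complex.I * (Real.sqrt 3 : ℂ) * (rh : ℂ) - 5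
            + 5 * Complex.I * (Real.sqrt 3 : ℂ),
          -4 * (rh : ℂ) ^ 2 - 2 * Complex.I * (Real.sqrt 3 : ℂ) * (rh : ℂ) + 16
            + 4 * Complex.I * (Real.sqrt 3 : ℂ),
          -2 * (rh : ℂ) ^ 2 + 4 * (rh : ℂ) - 3 - 3 * Complex.I * (Real.sqrt 3 : ℂ),
          2 * (rh : ℂ) ^ 3 - 12 * (rh : ℂ) + 8] := by
    intro x
    constructor
    · intro hx
      rw [Stmt13Aux.D4_eq] at hx
      have e0 := congrFun hx 0
      have e1 := congrFun hx 1
      have e2 := congrFun hx 2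
      have e3 := congrFun hx 3
      simp [Matrix.mulVec, dotProduct, Fin.sum_univ_four] at e0 e1 e2 e3
      refine ⟨x 3 / (2 * (rh : ℂ) ^ 3 - 12 * (rh : ℂ) + 8), ?_⟩
      have g0 : x 0 = x 3 / (2 * (rh : ℂ) ^ 3 - 12 * (rh : ℂ) + 8) *
          (2 * (rh : ℂ) ^ 2 - 4 * Complex.I * (Real.sqrt 3 : ℂ) * (rh : ℂ) - 5
            + 5 * Complex.I * (Real.sqrt 3 : ℂ)) := by
        rw [div_mul_eq_mul_div, eq_div_iff hv3]
        linear_combination (2 * (rh : ℂ) ^ 2 - 2) * e0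
          + (2 - 2 * (Complex.I * (Real.sqrt 3 : ℂ)) - (rh : ℂ) + (rh : ℂ) * (Complex.I * (Real.sqrt 3 : ℂ))) * e1
          + (-1 - (Complex.I * (Real.sqrt 3 : ℂ)) + 2 * (rh : ℂ) + 2 * (rh : ℂ) * (Complex.I * (Real.sqrt 3 : ℂ))) * e2
          + ((2 - (5 / 2 : ℂ) * (rh : ℂ)) * x 0 + ((1 / 2 : ℂ) - (rh : ℂ)) * x 1
              + (-1 + (1 / 2 : ℂ) * (rh : ℂ)) * x 2) * Stmt13Aux.s3_sq
      have g1 : x 1 = x 3 / (2 * (rh : ℂ) ^ 3 - 12 * (rh : ℂ) + 8) *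
          (-4 * (rh : ℂ) ^ 2 - 2 * Complex.I * (Real.sqrt 3 : ℂ) * (rh : ℂ) + 16
            + 4 * Complex.I * (Real.sqrt 3 : ℂ)) := by
        rw [div_mul_eq_mul_div, eq_div_iff hv3]
        linear_combination (2 + 2 * (Complex.I * (Real.sqrt 3 : ℂ)) - (rh : ℂ) - (rh : ℂ) * (Complex.I * (Real.sqrt 3 : ℂ))) * e0
          + (2 * (rh : ℂ) ^ 2 - 8) * e1
          + (2 - 2 * (Complex.I * (Real.sqrt 3 : ℂ)) - (rh : ℂ) + (rh : ℂ) * (Complex.I * (Real.sqrt 3 : ℂ))) * e2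
          + ((2 - (rh : ℂ)) * x 0 + (2 - (rh : ℂ)) * x 1 + (2 - (rh : ℂ)) * x 2) * Stmt13Aux.s3_sq
      have g2 : x 2 = x 3 / (2 * (rh : ℂ) ^ 3 - 12 * (rh : ℂ) + 8) *
          (-2 * (rh : ℂ) ^ 2 + 4 * (rh : ℂ) - 3 - 3 * Complex.I * (Real.sqrt 3 : ℂ)) := by
        rw [div_mul_eq_mul_div, eq_div_iff hv3]
        linear_combination (-1 + (Complex.I * (Real.sqrt 3 : ℂ)) + 2 * (rh : ℂ) - 2 * (rh : ℂ) * (Complex.I * (Real.sqrt 3 : ℂ))) * e0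
          + (2 + 2 * (Complex.I * (Real.sqrt 3 : ℂ)) - (rh : ℂ) - (rh : ℂ) * (Complex.I * (Real.sqrt 3 : ℂ))) * e1
          + (2 * (rh : ℂ) ^ 2 - 2) * e2
          + ((-1 + (1 / 2 : ℂ) * (rh : ℂ)) * x 0 + ((1 / 2 : ℂ) - (rh : ℂ)) * x 1
              + (2 - (5 / 2 : ℂ) * (rh : ℂ)) * x 2) * Stmt13Aux.s3_sq
      have g3 : x 3 = x 3 / (2 * (rh : ℂ) ^ 3 - 12 * (rh : ℂ) + 8) *
          (2 * (rh : ℂ) ^ 3 - 12 * (rh : ℂ) + 8) := by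
        rw [div_mul_eq_mul_div, eq_div_iff hv3]
      funext i
      fin_cases i
      · exact g0
      · exact g1
      · exact g2
      · exact g3
    · rintro ⟨c, rfl⟩
      rw [Matrix.mulVec_smul]
      have hv : (D4 rh).mulVec
          ![2 * (rh : ℂ) ^ 2 - 4 * Complex.I * (Real.sqrt 3 : ℂ) * (rh : ℂ) - 5
              + 5 * Complex.I * (Real.sqrt 3 : ℂ),
            -4 * (rh : ℂ) ^ 2 - 2 * Complex.I * (Real.sqrt 3 : ℂ) * (rh : ℂ) + 16
              + 4 * Complex.I * (Real.sqrt 3 : ℂ),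
            -2 * (rh : ℂ) ^ 2 + 4 * (rh : ℂ) - 3 - 3 * Complex.I * (Real.sqrt 3 : ℂ),
            2 * (rh : ℂ) ^ 3 - 12 * (rh : ℂ) + 8] = 0 := by
        rw [Stmt13Aux.D4_eq]
        funext j
        fin_cases j <;>
          simp [Matrix.mulVec, dotProduct, Fin.sum_univ_four, -Complex.ofReal_pow]
        · linear_combination (1 + (rh : ℂ)) * Stmt13Aux.s3_sq
        · linear_combination (4 - 2 * (rh : ℂ)) * Stmt13Aux.s3_sq
        · linear_combination (7 - 5 * (rh : ℂ)) * Stmt13Aux.s3_sq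
        · linear_combination (2 + 2 * (rh : ℂ)) * hqC
      rw [hv, smul_zero]
  -- PSD
  have hpsd : (D4 rh).PosSemidef := by
    apply (Matrix.IsHermitian.posSemidef_iff_eigenvalues_nonneg hH).2
    intro i
    by_contra hneg
    push_neg at hneg
    simp only [Pi.zero_apply] at hneg
    set μ := hH.eigenvalues i with hμ
    have hev := hH.mulVec_eigenvectorBasis i
    have hvne : (⇑(hH.eigenvectorBasis i) : Fin 4 → ℂ) ≠ 0 := by
      have := hH.eigenvectorBasis.toBasis.ne_zero i
      simpa using this
    have hker0 : (D4 (rh - μ)).mulVec ⇑(hH.eigenvectorBasis i) = 0 := by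
      rw [Stmt13Aux.D4_sub_smul, Matrix.sub_mulVec, hev, Matrix.smul_mulVec, Matrix.one_mulVec]
      funext j
      simp [Complex.real_smul, hμ]
    have hdet0 : (D4 (rh - μ)).det = 0 :=
      (Matrix.exists_mulVec_eq_zero_iff).1 ⟨_, hvne, hker0⟩
    rw [Stmt13Aux.det_D4] at hdet0
    have hre : (rh - μ) ^ 4 - 12 * (rh - μ) ^ 2 + 6 * (rh - μ) + 17 = 0 := by
      have : (((rh - μ) ^ 4 - 12 * (rh - μ) ^ 2 + 6 * (rh - μ) + 17 : ℝ) : ℂ) = 0 := by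
        push_cast at hdet0 ⊢
        linear_combination hdet0
      exact_mod_cast this
    have := hmax (rh - μ) hre
    linarith
  -- the kernel vector is nonzero
  have hvne : (![2 * (rh : ℂ) ^ 2 - 4 * Complex.I * (Real.sqrt 3 : ℂ) * (rh : ℂ) - 5
      + 5 * Complex.I * (Real.sqrt 3 : ℂ),
    -4 * (rh : ℂ) ^ 2 - 2 * Complex.I * (Real.sqrt 3 : ℂ) * (rh : ℂ) + 16
      + 4 * Complex.I * (Real.sqrt 3 : ℂ),
    -2 * (rh : ℂ) ^ 2 + 4 * (rh : ℂ) - 3 - 3 * Complex.I * (Real.sqrt 3 : ℂ),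
    2 * (rh : ℂ) ^ 3 - 12 * (rh : ℂ) + 8] : Fin 4 → ℂ) ≠ 0 := by
    intro h
    apply hv3
    have := congrFun h 3
    simpa using this
  -- rank
  have hrank : (D4 rh).rank = 3 := by
    have hkerspan : LinearMap.ker (D4 rh).mulVecLin = Submodule.span ℂ
        {![2 * (rh : ℂ) ^ 2 - 4 * Complex.I * (Real.sqrt 3 : ℂ) * (rh : ℂ) - 5
            + 5 * Complex.I * (Real.sqrt 3 : ℂ),
          -4 * (rh : ℂ) ^ 2 - 2 * Complex.I * (Real.sqrt 3 : ℂ) * (rh : ℂ) + 16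
            + 4 * Complex.I * (Real.sqrt 3 : ℂ),
          -2 * (rh : ℂ) ^ 2 + 4 * (rh : ℂ) - 3 - 3 * Complex.I * (Real.sqrt 3 : ℂ),
          2 * (rh : ℂ) ^ 3 - 12 * (rh : ℂ) + 8]} := by
      ext x
      rw [LinearMap.mem_ker, Matrix.mulVecLin_apply, Submodule.mem_span_singleton, hker x]
      constructor
      · rintro ⟨c, rfl⟩; exact ⟨c, rfl⟩
      · rintro ⟨c, hc⟩; exact ⟨c, hc.symm⟩
    have hsum := LinearMap.finrank_range_add_finrank_ker (D4 rh).mulVecLin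
    rw [hkerspan, finrank_span_singleton hvne, Module.finrank_fintype_fun_eq_card] at hsum
    simp only [Fintype.card_fin] at hsum
    have : (D4 rh).rank + 1 = 4 := hsum
    omega
  exact ⟨Stmt13Aux.det_D4, rh, by linear_combination (rh + 1) * hq', hmax,
    by nlinarith, hpsd, hrank, hker⟩
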